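/- For every odd n >= 7, the generalized Petersen graph GP(n,3) admits no perfect 2-coloring with parameter matrix [[1,2],[2,1]]. -/

import Mathlib

/-- The generalized Petersen graph `GP n k`. Vertices are pairs `(s, i)` with
`s : Bool` (`false` = outer vertex `aᵢ`, `true` = inner vertex `bᵢ`) and `i : ZMod n`.
Edges: `aᵢ aᵢ₊₁`, `aᵢ bᵢ`, `bᵢ bᵢ₊ₖ`. -/
def GP (n k : ℕ) : SimpleGraph (Bool × ZMod n) :=
  SimpleGraph.fromRel (fun v w =>
    (v.1 = false ∧ w.1 = false ∧ w.2 = v.2 + 1) ∨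
    (v.1 = false ∧ w.1 = true ∧ w.2 = v.2) ∨
    (v.1 = true ∧ w.1 = true ∧ w.2 = v.2 + (k : ZMod n)))

/-- `T` is a perfect 2-coloring of `G` with parameter matrix `A`:
`T` is surjective onto the two colors (color `0` = white = "1", color `1` = black = "2"),
and every vertex of color `i` has exactly `A i j` neighbors of color `j`. -/
def IsPerfectColoring {V : Type*} (G : SimpleGraph V) (T : V → Fin 2)
    (A : Matrix (Fin 2) (Fin 2) ℕ) : Prop :=
  Function.Surjective T ∧
  ∀ v : V, ∀ j : Fin 2, {w | G.Adj v w ∧ T w = j}.ncard = A (T v) j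

/-- The subgraph of white (color 0) monochromatic edges. -/
def monoSub {V : Type*} (G : SimpleGraph V) (T : V → Fin 2) : SimpleGraph V where
  Adj v w := G.Adj v w ∧ T v = 0 ∧ T w = 0
  symm := ⟨fun v w h => ⟨G.symm.symm _ _ h.1, h.2.2, h.2.1⟩⟩
  loopless := ⟨fun v h => G.loopless.irrefl v h.1⟩

theorem stmt_6 (n : ℕ) (hn : 7 ≤ n) (hOdd : Odd n) (T : Bool × ZMod n → Fin 2) :
    ¬ IsPerfectColoring (GP n 3) T !![1, 2; 2, 1] := by
  haveI : NeZero n := ⟨by omega⟩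
  classical
  rintro ⟨-, hcount⟩
  set G := GP n 3 with hG
  -- counts in Finset form
  have hc : ∀ (v : Bool × ZMod n) (j : Fin 2),
      (Finset.univ.filter (fun w => G.Adj v w ∧ T w = j)).card = !![1, 2; 2, 1] (T v) j := by
    intro v j
    rw [← hcount v j, Set.ncard_eq_toFinset_card']
    simp [Set.toFinset_setOf]
  have fin2 : ∀ x : Fin 2, ¬x = 0 ↔ x = 1 := by decide
  have A00 : !![1, 2; 2, 1] (0 : Fin 2) (0 : Fin 2) = 1 := by norm_num
  have A01 : !![1, 2; 2, 1] (0 : Fin 2) (1 : Fin 2) = 2 := by norm_num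
  have A10 : !![1, 2; 2, 1] (1 : Fin 2) (0 : Fin 2) = 2 := by norm_num
  set W : Finset (Bool × ZMod n) := Finset.univ.filter (fun v => T v = 0) with hW
  set B : Finset (Bool × ZMod n) := Finset.univ.filter (fun v => T v = 1) with hB
  -- Step 1: |W| = |B| by double counting bichromatic edges
  have S1 : ∑ v : Bool × ZMod n, ∑ w : Bool × ZMod n,
      (if G.Adj v w ∧ T v = 0 ∧ T w = 1 then 1 else 0) = 2 * W.card := by
    have h1 : ∀ v : Bool × ZMod n,
        (∑ w : Bool × ZMod n, if G.Adj v w ∧ T v = 0 ∧ T w = 1 then 1 else 0)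
          = if T v = 0 then 2 else 0 := by
      intro v
      by_cases hv : T v = 0
      · rw [if_pos hv]
        calc (∑ w : Bool × ZMod n, if G.Adj v w ∧ T v = 0 ∧ T w = 1 then 1 else 0)
            = ∑ w : Bool × ZMod n, (if G.Adj v w ∧ T w = 1 then 1 else 0) := by
              refine Finset.sum_congr rfl fun w _ => ?_
              simp [hv]
          _ = (Finset.univ.filter (fun w => G.Adj v w ∧ T w = 1)).card :=
              (Finset.card_filter _ _).symm
          _ = 2 := by rw [hc v 1, hv, A01]
      · rw [if_neg hv]
        exact Finset.sum_eq_zero fun w _ => by simp [hv]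
    rw [Finset.sum_congr rfl fun v _ => h1 v, ← Finset.sum_filter, ← hW,
      Finset.sum_const, smul_eq_mul, mul_comm]
  have S2 : ∑ w : Bool × ZMod n, ∑ v : Bool × ZMod n,
      (if G.Adj v w ∧ T v = 0 ∧ T w = 1 then 1 else 0) = 2 * B.card := by
    have h1 : ∀ w : Bool × ZMod n,
        (∑ v : Bool × ZMod n, if G.Adj v w ∧ T v = 0 ∧ T w = 1 then 1 else 0)
          = if T w = 1 then 2 else 0 := by
      intro w
      by_cases hw : T w = 1
      · rw [if_pos hw]
        calc (∑ v : Bool × ZMod n, if G.Adj v w ∧ T v = 0 ∧ T w = 1 then 1 else 0)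
            = ∑ v : Bool × ZMod n, (if G.Adj w v ∧ T v = 0 then 1 else 0) := by
              refine Finset.sum_congr rfl fun v _ => ?_
              simp [hw, G.adj_comm]
          _ = (Finset.univ.filter (fun v => G.Adj w v ∧ T v = 0)).card :=
              (Finset.card_filter _ _).symm
          _ = 2 := by rw [hc w 0, hw, A10]
      · rw [if_neg hw]
        exact Finset.sum_eq_zero fun v _ => by simp [hw]
    rw [Finset.sum_congr rfl fun w _ => h1 w, ← Finset.sum_filter, ← hB,
      Finset.sum_const, smul_eq_mul, mul_comm]
  have hWB : W.card = B.card := by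
    have := S1.symm.trans ((Finset.sum_comm).trans S2)
    omega
  have hcardV : Fintype.card (Bool × ZMod n) = 2 * n := by
    rw [Fintype.card_prod, Fintype.card_bool, ZMod.card]
  have hsplit : W.card + B.card = 2 * n := by
    have h := Finset.card_filter_add_card_filter_not
      (s := (Finset.univ : Finset (Bool × ZMod n))) (p := fun v => T v = 0)
    have hfe : Finset.univ.filter (fun v => ¬ T v = 0) = B := by
      apply Finset.filter_congr
      intro v _
      exact fin2 (T v)
    rw [hfe] at h
    rw [← hW] at h
    rw [h, Finset.card_univ, hcardV]
  have hWn : W.card = n := by omega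
  -- Step 2: white mono edges form a 1-regular graph on W, so |W| is even
  haveI : DecidableRel (monoSub G T).Adj := Classical.decRel _
  have hdeg : ∀ v : Bool × ZMod n, (monoSub G T).degree v = if T v = 0 then 1 else 0 := by
    intro v
    rw [SimpleGraph.degree, SimpleGraph.neighborFinset_eq_filter]
    by_cases hv : T v = 0
    · rw [if_pos hv]
      have : (Finset.univ.filter fun w => (monoSub G T).Adj v w)
          = Finset.univ.filter (fun w => G.Adj v w ∧ T w = 0) := by
        apply Finset.filter_congr
        intro w _
        simp [monoSub, hv]
      rw [this, hc v 0, hv, A00]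
    · rw [if_neg hv]
      rw [Finset.card_eq_zero, Finset.filter_eq_empty_iff]
      intro w _
      simp [monoSub, hv]
  have heven : Even (∑ v : Bool × ZMod n, (monoSub G T).degree v) :=
    ⟨(monoSub G T).edgeFinset.card, by
      rw [SimpleGraph.sum_degrees_eq_twice_card_edges]; ring⟩
  have hsum : (∑ v : Bool × ZMod n, (monoSub G T).degree v) = W.card := by
    rw [Finset.sum_congr rfl fun v _ => hdeg v, ← Finset.sum_filter, ← hW]
    simp
  rw [hsum, hWn] at heven
  exact (Nat.not_even_iff_odd.mpr hOdd) heven
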